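/- Suppose {D₁,…,Dₘ} is a nontrivial (v,m,k,λ)-SEDF in an abelian group G with 1 ∉ ⋃ᵢ Dᵢ. Then for each j, neither D_j ∪ {1} nor G \ D_j is a subgroup of G. -/

import Mathlib

open Finset

/-- `{D j}` is a `(v, m, k, lam)`-strong external difference family in the
abelian group `G`: mutually disjoint `k`-subsets whose defining group-ring
identity `D_j · (∑_{i≠j} D_i^{(-1)}) = lam (G - 1)` holds in `ℤ[G]`. -/
def IsSEDF {G : Type} [CommGroup G] [Fintype G] [DecidableEq G]
    (v m k lam : ℕ) (D : Fin m → Finset G) : Prop :=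
  Fintype.card G = v ∧ 2 ≤ m ∧ (∀ i, (D i).card = k) ∧
  (∀ i j, i ≠ j → Disjoint (D i) (D j)) ∧
  ∀ j, (∑ d ∈ D j, MonoidAlgebra.of ℤ G d) *
      (∑ i ∈ Finset.univ.erase j, ∑ d ∈ D i, MonoidAlgebra.of ℤ G d⁻¹)
    = (lam : ℤ) • ((∑ g : G, MonoidAlgebra.of ℤ G g) - 1)

theorem sedf_not_subgroup {G : Type} [CommGroup G] [Fintype G]
    [DecidableEq G] {v m k lam : ℕ} (D : Fin m → Finset G)
    (h : IsSEDF v m k lam D) (hk : 1 < k)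
    (h1 : (1 : G) ∉ Finset.univ.biUnion D) (j : Fin m) :
    (∀ H : Subgroup G, (H : Set G) ≠ insert (1 : G) ↑(D j)) ∧
    (∀ H : Subgroup G, (H : Set G) ≠ (↑(D j) : Set G)ᶜ) := by
  classical
  obtain ⟨hv, hm, hcard, hdisj, heq⟩ := h
  have h1' : ∀ i, (1 : G) ∉ D i := by
    intro i hi
    exact h1 (Finset.mem_biUnion.2 ⟨i, Finset.mem_univ i, hi⟩)
  -- pointwise evaluation of the SEDF identity
  have expand : ∀ x : G,
      (∑ a ∈ D j, ∑ i ∈ Finset.univ.erase j, ∑ d ∈ D i,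
        (if a * d⁻¹ = x then (1:ℤ) else 0))
      = (lam : ℤ) * (1 - if (1 : G) = x then 1 else 0) := by
    intro x
    have h2 : (∑ a ∈ D j, ∑ i ∈ Finset.univ.erase j, ∑ d ∈ D i,
        Finsupp.single (a * d⁻¹) (1:ℤ))
        = (lam : ℤ) • ((∑ g : G, Finsupp.single g (1:ℤ)) - Finsupp.single (1:G) (1:ℤ)) := by
      suffices hs : (∑ a ∈ D j, ∑ i ∈ Finset.univ.erase j, ∑ d ∈ D i,
          MonoidAlgebra.single (a * d⁻¹) (1:ℤ))
        = (lam : ℤ) • ((∑ g : G, MonoidAlgebra.single g (1:ℤ)) - MonoidAlgebra.single (1:G) (1:ℤ)) by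
        simpa only [MonoidAlgebra.coeff_sum, MonoidAlgebra.coeff_sub, MonoidAlgebra.coeff_single,
          MonoidAlgebra.coeff_smul] using
          congrArg MonoidAlgebra.coeff hs
      rw [← MonoidAlgebra.one_def]
      simp only [← MonoidAlgebra.of_apply (R := ℤ)]
      rw [← heq j, Finset.sum_mul]
      refine Finset.sum_congr rfl fun a _ => ?_
      rw [Finset.mul_sum]
      refine Finset.sum_congr rfl fun i _ => ?_
      rw [Finset.mul_sum]
      refine Finset.sum_congr rfl fun d _ => ?_
      simp [MonoidAlgebra.of_apply, MonoidAlgebra.single_mul_single]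
    have h3 := Finsupp.ext_iff.1 h2 x
    simp only [Finset.sum_apply', Finsupp.single_apply, Finsupp.smul_apply,
      Finsupp.sub_apply, Finset.sum_ite_eq', Finset.mem_univ, if_true, smul_eq_mul] at h3
    exact h3
  -- existence of elements
  obtain ⟨i0, hi0⟩ := Fintype.exists_ne_of_one_lt_card (by simp; omega) j
  obtain ⟨d0, hd0⟩ := Finset.card_pos.1 (by rw [hcard i0]; omega)
  obtain ⟨a0, ha0⟩ := Finset.card_pos.1 (by rw [hcard j]; omega)
  have hd0j : d0 ∉ D j := Finset.disjoint_left.1 (hdisj i0 j hi0) hd0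
  have hi0e : i0 ∈ Finset.univ.erase j := Finset.mem_erase.2 ⟨hi0, Finset.mem_univ i0⟩
  -- lam is positive
  have hlam : (0 : ℤ) < lam := by
    have hx := expand (a0 * d0⁻¹)
    have hne : (1 : G) ≠ a0 * d0⁻¹ := by
      intro hcon
      have : a0 = d0 := by
        have := hcon.symm
        rwa [mul_inv_eq_one] at this
      exact hd0j (this ▸ ha0)
    rw [if_neg hne] at hx
    have hpos : (0:ℤ) < ∑ a ∈ D j, ∑ i ∈ Finset.univ.erase j, ∑ d ∈ D i,
        (if a * d⁻¹ = a0 * d0⁻¹ then (1:ℤ) else 0) := by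
      refine Finset.sum_pos' (fun a _ => Finset.sum_nonneg fun i _ =>
        Finset.sum_nonneg fun d _ => by positivity) ⟨a0, ha0, ?_⟩
      refine Finset.sum_pos' (fun i _ => Finset.sum_nonneg fun d _ => by positivity)
        ⟨i0, hi0e, ?_⟩
      refine Finset.sum_pos' (fun d _ => by positivity) ⟨d0, hd0, by simp⟩
    have := hx ▸ hpos
    nlinarith
  -- main counting lemma
  have main : ∀ S : Finset G, (1:G) ∈ S → 2 ≤ S.card →
      (∀ a ∈ D j, ∀ i ∈ Finset.univ.erase j, ∀ d ∈ D i, a * d⁻¹ ∉ S) →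
      False := by
    intro S h1S hcard2 hout
    have hL : ∑ x ∈ S, (∑ a ∈ D j, ∑ i ∈ Finset.univ.erase j, ∑ d ∈ D i,
        (if a * d⁻¹ = x then (1:ℤ) else 0)) = 0 := by
      rw [Finset.sum_comm]
      refine Finset.sum_eq_zero fun a ha => ?_
      rw [Finset.sum_comm]
      refine Finset.sum_eq_zero fun i hi => ?_
      rw [Finset.sum_comm]
      refine Finset.sum_eq_zero fun d hd => ?_
      rw [Finset.sum_ite_eq S (a * d⁻¹) (fun _ => (1:ℤ))]
      exact if_neg (hout a ha i hi d hd)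
    have hR : ∑ x ∈ S, (lam : ℤ) * (1 - if (1 : G) = x then 1 else 0)
        = (lam : ℤ) * (S.card - 1) := by
      rw [← Finset.mul_sum, Finset.sum_sub_distrib, Finset.sum_ite_eq S 1 (fun _ => (1:ℤ))]
      simp [h1S]
    have h0 : (lam : ℤ) * ((S.card : ℤ) - 1) = 0 := by
      have hs := Finset.sum_congr rfl fun x (_ : x ∈ S) => expand x
      rw [hL] at hs
      rw [hR] at hs
      exact hs.symm
    rcases mul_eq_zero.1 h0 with hz | hz
    · omega
    · have : (2:ℤ) ≤ S.card := by exact_mod_cast hcard2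
      omega
  constructor
  · intro H hH
    have hmem : ∀ x : G, x ∈ H ↔ x = 1 ∨ x ∈ D j := by
      intro x
      have := Set.ext_iff.1 hH x
      simpa using this
    refine main (Finset.univ.filter (fun x => x ∈ H)) ?_ ?_ ?_
    · simp [Finset.mem_filter, (hmem 1).2 (Or.inl rfl)]
    · refine Finset.one_lt_card.2 ⟨1, ?_, a0, ?_, ?_⟩
      · simp [Finset.mem_filter, (hmem 1).2 (Or.inl rfl)]
      · simp [Finset.mem_filter, (hmem a0).2 (Or.inr ha0)]
      · exact fun hcon => h1' j (hcon ▸ ha0)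
    · intro a ha i hi d hd hin
      rw [Finset.mem_filter] at hin
      have haH : a ∈ H := (hmem a).2 (Or.inr ha)
      have hdH : d ∈ H := by
        have : (a * d⁻¹)⁻¹ * a ∈ H := H.mul_mem (H.inv_mem hin.2) haH
        simpa [mul_inv_rev, mul_assoc] using this
      rcases (hmem d).1 hdH with h' | h'
      · exact h1' i (h' ▸ hd)
      · exact Finset.disjoint_left.1 (hdisj i j (Finset.mem_erase.1 hi).1) hd h'
  · intro H hH
    have hmem : ∀ x : G, x ∈ H ↔ x ∉ D j := by
      intro x
      have := Set.ext_iff.1 hH x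
      simpa using this
    refine main (Finset.univ.filter (fun x => x ∈ H)) ?_ ?_ ?_
    · simp [Finset.mem_filter, (hmem 1).2 (h1' j)]
    · refine Finset.one_lt_card.2 ⟨1, ?_, d0, ?_, ?_⟩
      · simp [Finset.mem_filter, (hmem 1).2 (h1' j)]
      · simp [Finset.mem_filter, (hmem d0).2 hd0j]
      · exact fun hcon => h1' i0 (hcon ▸ hd0)
    · intro a ha i hi d hd hin
      rw [Finset.mem_filter] at hin
      have hdH : d ∈ H := (hmem d).2
        (Finset.disjoint_left.1 (hdisj i j (Finset.mem_erase.1 hi).1) hd)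
      have haH : a ∈ H := by
        have : (a * d⁻¹) * d ∈ H := H.mul_mem hin.2 hdH
        simpa [mul_assoc] using this
      exact (hmem a).1 haH ha
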